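/- For every n ≥ 2 and any vectors v_1,...,v_n in ℓ^q (1 < q < ∞), ∑_{1≤i<j≤n} ‖v_i - v_j‖_q^q ≤ n·2^{q-2}·∑_{i=1}^n ‖v_i‖_q^q. -/
import Mathlib

open Finset

/-- signed power map `t ↦ sign t * |t|^p`. -/
noncomputable def sgnPow (p t : ℝ) : ℝ := if 0 ≤ t then t ^ p else -((-t) ^ p)

lemma sgnPow_sq (p : ℝ) (t : ℝ) : (sgnPow p t) ^ 2 = (|t| ^ p) ^ 2 := by
  unfold sgnPow
  split_ifs with h
  · rw [abs_of_nonneg h]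
  · rw [abs_of_neg (lt_of_not_ge h), neg_sq]

lemma real_superadd {p x y : ℝ} (hp : 1 ≤ p) (hx : 0 ≤ x) (hy : 0 ≤ y) :
    x ^ p + y ^ p ≤ (x + y) ^ p := by
  have h := NNReal.add_rpow_le_rpow_add x.toNNReal y.toNNReal hp
  have := NNReal.coe_le_coe.2 h
  simpa only [NNReal.coe_add, NNReal.coe_rpow, Real.coe_toNNReal _ hx,
    Real.coe_toNNReal _ hy] using this

lemma real_convex2 {p x y : ℝ} (hp : 1 ≤ p) (hx : 0 ≤ x) (hy : 0 ≤ y) :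
    (x + y) ^ p ≤ 2 ^ (p - 1) * (x ^ p + y ^ p) := by
  have h := (convexOn_rpow hp).2 (Set.mem_Ici.2 hx) (Set.mem_Ici.2 hy)
    (by norm_num : (0:ℝ) ≤ 1/2) (by norm_num : (0:ℝ) ≤ 1/2) (by norm_num)
  simp only [smul_eq_mul] at h
  have hxy : 0 ≤ x + y := by positivity
  have key : (x + y) ^ p = 2 ^ p * ((1/2) * x + (1/2) * y) ^ p := by
    rw [← Real.mul_rpow (by norm_num) (by positivity)]
    ring_nf
  rw [key]
  calc 2 ^ p * ((1/2) * x + (1/2) * y) ^ p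
      ≤ 2 ^ p * ((1/2) * x ^ p + (1/2) * y ^ p) := by
        apply mul_le_mul_of_nonneg_left h (by positivity)
    _ = 2 ^ p * (1/2) * (x ^ p + y ^ p) := by ring
    _ = 2 ^ (p - 1) * (x ^ p + y ^ p) := by
        rw [Real.rpow_sub (by norm_num : (0:ℝ) < 2), Real.rpow_one]
        ring

/-- Key scalar inequality: `|x - y|^q ≤ 2^(q-2) * (sgnPow (q/2) x - sgnPow (q/2) y)^2`. -/
lemma scalar_key {q : ℝ} (hq : 2 ≤ q) {x y : ℝ} (hxy : y ≤ x) :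
    |x - y| ^ q ≤ 2 ^ (q - 2) * (sgnPow (q/2) x - sgnPow (q/2) y) ^ 2 := by
  set p := q / 2 with hp_def
  have hp1 : 1 ≤ p := by rw [hp_def]; linarith
  have hp0 : 0 ≤ p := by linarith
  have habs : |x - y| = x - y := abs_of_nonneg (by linarith)
  have hq2 : q = p * 2 := by rw [hp_def]; ring
  have hpow2 : ∀ t : ℝ, 0 ≤ t → t ^ q = (t ^ p) ^ 2 := by
    intro t ht
    rw [hq2, Real.rpow_mul ht, Real.rpow_two]
  have h2q2 : (1:ℝ) ≤ 2 ^ (q - 2) :=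
    Real.one_le_rpow (by norm_num) (by linarith)
  rcases le_or_gt 0 y with hy | hy
  · -- 0 ≤ y ≤ x
    have hx : 0 ≤ x := le_trans hy hxy
    have hφx : sgnPow p x = x ^ p := if_pos hx
    have hφy : sgnPow p y = y ^ p := if_pos hy
    have hsub : (x - y) ^ p ≤ x ^ p - y ^ p := by
      have := real_superadd hp1 (by linarith : (0:ℝ) ≤ x - y) hy
      have h2 : (x - y + y) = x := by ring
      rw [h2] at this
      linarith
    have hnn : (0:ℝ) ≤ (x - y) ^ p := Real.rpow_nonneg (by linarith) _
    calc |x - y| ^ q = ((x - y) ^ p) ^ 2 := by rw [habs, hpow2 _ (by linarith)]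
      _ ≤ (x ^ p - y ^ p) ^ 2 := by
          apply pow_le_pow_left₀ hnn hsub
      _ ≤ 2 ^ (q - 2) * (x ^ p - y ^ p) ^ 2 := le_mul_of_one_le_left (sq_nonneg _) h2q2
      _ = 2 ^ (q - 2) * (sgnPow p x - sgnPow p y) ^ 2 := by rw [hφx, hφy]
  · rcases le_or_gt 0 x with hx | hx
    · -- y < 0 ≤ x : mixed signs
      have hφx : sgnPow p x = x ^ p := if_pos hx
      have hφy : sgnPow p y = -((-y) ^ p) := if_neg (not_le.2 hy)
      have hw : (0:ℝ) ≤ -y := by linarith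
      have hsum : x - y = x + (-y) := by ring
      have hconv := real_convex2 hp1 hx hw
      have hnn : (0:ℝ) ≤ (x + -y) ^ p := Real.rpow_nonneg (by linarith) _
      calc |x - y| ^ q = ((x + -y) ^ p) ^ 2 := by
            rw [habs, hsum, hpow2 _ (by linarith)]
        _ ≤ (2 ^ (p - 1) * (x ^ p + (-y) ^ p)) ^ 2 := by
            apply pow_le_pow_left₀ hnn hconv
        _ = (2 ^ (p - 1)) ^ 2 * (x ^ p + (-y) ^ p) ^ 2 := by ring
        _ = 2 ^ (q - 2) * (x ^ p + (-y) ^ p) ^ 2 := by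
            rw [← Real.rpow_two, ← Real.rpow_mul (by norm_num : (0:ℝ) ≤ 2)]
            congr 1
            rw [hq2]; ring
        _ = 2 ^ (q - 2) * (sgnPow p x - sgnPow p y) ^ 2 := by
            rw [hφx, hφy]; ring_nf
    · -- y ≤ x < 0
      have hφx : sgnPow p x = -((-x) ^ p) := if_neg (not_le.2 hx)
      have hφy : sgnPow p y = -((-y) ^ p) := if_neg (not_le.2 hy)
      have hu : (0:ℝ) ≤ -x := by linarith
      have hsub : (x - y) ^ p ≤ (-y) ^ p - (-x) ^ p := by
        have := real_superadd hp1 (by linarith : (0:ℝ) ≤ x - y) hu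
        have h2 : (x - y + -x) = -y := by ring
        rw [h2] at this
        linarith
      have hnn : (0:ℝ) ≤ (x - y) ^ p := Real.rpow_nonneg (by linarith) _
      calc |x - y| ^ q = ((x - y) ^ p) ^ 2 := by rw [habs, hpow2 _ (by linarith)]
        _ ≤ ((-y) ^ p - (-x) ^ p) ^ 2 := by apply pow_le_pow_left₀ hnn hsub
        _ ≤ 2 ^ (q - 2) * ((-y) ^ p - (-x) ^ p) ^ 2 :=
            le_mul_of_one_le_left (sq_nonneg _) h2q2
        _ = 2 ^ (q - 2) * (sgnPow p x - sgnPow p y) ^ 2 := by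
            rw [hφx, hφy]; ring_nf

lemma scalar_key' {q : ℝ} (hq : 2 ≤ q) (x y : ℝ) :
    |x - y| ^ q ≤ 2 ^ (q - 2) * (sgnPow (q/2) x - sgnPow (q/2) y) ^ 2 := by
  rcases le_total y x with h | h
  · exact scalar_key hq h
  · have := scalar_key hq (x := y) (y := x) h
    rwa [abs_sub_comm, (by ring : (sgnPow (q/2) y - sgnPow (q/2) x)^2
      = (sgnPow (q/2) x - sgnPow (q/2) y)^2)] at this

/-- Hilbert-space identity bound: `∑_{i<j} (b i - b j)^2 ≤ n * ∑ b i ^ 2`. -/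
lemma hilbert_bound (n : ℕ) (b : Fin n → ℝ) :
    ∑ p ∈ univ.filter (fun p : Fin n × Fin n => p.1 < p.2), (b p.1 - b p.2) ^ 2
      ≤ n * ∑ i, b i ^ 2 := by
  have hswap : ∑ p ∈ univ.filter (fun p : Fin n × Fin n => p.1 < p.2), (b p.1 - b p.2) ^ 2
      = ∑ p ∈ univ.filter (fun p : Fin n × Fin n => p.2 < p.1), (b p.1 - b p.2) ^ 2 := by
    apply Finset.sum_nbij' (fun p => Prod.swap p) (fun p => Prod.swap p) <;>
      simp [Prod.swap] <;> intros <;> ring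
  have hdisj : Disjoint (univ.filter (fun p : Fin n × Fin n => p.1 < p.2))
      (univ.filter (fun p : Fin n × Fin n => p.2 < p.1)) := by
    simp only [Finset.disjoint_filter]
    intro p _ h1
    exact not_lt.2 (le_of_lt h1)
  have hA : ∀ i, ∑ j : Fin n, (b i - b j) ^ 2
      = (n : ℝ) * b i ^ 2 - 2 * b i * (∑ j, b j) + ∑ j, b j ^ 2 := by
    intro i
    have he : ∀ j, (b i - b j) ^ 2 = b i ^ 2 - 2 * b i * b j + b j ^ 2 := fun j => by ring
    simp only [he]
    rw [Finset.sum_add_distrib, Finset.sum_sub_distrib, Finset.sum_const, Finset.card_univ,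
      Fintype.card_fin, nsmul_eq_mul, ← Finset.mul_sum]
  have hfull : ∑ p ∈ (univ : Finset (Fin n × Fin n)), (b p.1 - b p.2) ^ 2
      = 2 * ((n : ℝ) * ∑ i, b i ^ 2) - 2 * (∑ i, b i) ^ 2 := by
    rw [Fintype.sum_prod_type]
    simp only [hA]
    rw [Finset.sum_add_distrib, Finset.sum_sub_distrib, ← Finset.mul_sum,
      Finset.sum_const, Finset.card_univ, Fintype.card_fin, nsmul_eq_mul]
    have hm : ∑ i, 2 * b i * (∑ j, b j) = 2 * (∑ i, b i) * (∑ j, b j) := by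
      rw [← Finset.sum_mul, ← Finset.mul_sum]
    rw [hm]
    ring
  have htwo : 2 * ∑ p ∈ univ.filter (fun p : Fin n × Fin n => p.1 < p.2), (b p.1 - b p.2) ^ 2
      ≤ ∑ p ∈ (univ : Finset (Fin n × Fin n)), (b p.1 - b p.2) ^ 2 := by
    rw [two_mul]
    nth_rewrite 2 [hswap]
    rw [← Finset.sum_union hdisj]
    apply Finset.sum_le_sum_of_subset_of_nonneg (Finset.subset_univ _)
    intro i _ _
    positivity
  have hfin : ∑ p ∈ (univ : Finset (Fin n × Fin n)), (b p.1 - b p.2) ^ 2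
      ≤ 2 * ((n : ℝ) * ∑ i, b i ^ 2) := by
    rw [hfull]
    have : (0:ℝ) ≤ (∑ i, b i) ^ 2 := sq_nonneg _
    linarith
  linarith

theorem stmt_6 (q : ℝ) (hq : 2 ≤ q) (n : ℕ) (hn : 2 ≤ n)
    (v : Fin n → lp (fun _ : ℕ => ℝ) (ENNReal.ofReal q)) :
    ∑ p ∈ Finset.univ.filter (fun p : Fin n × Fin n => p.1 < p.2),
        ‖v p.1 - v p.2‖ ^ q
      ≤ n * 2 ^ (q - 2) * ∑ i, ‖v i‖ ^ q := by
  have hq0 : (0:ℝ) < q := by linarith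
  have hP : (ENNReal.ofReal q).toReal = q := ENNReal.toReal_ofReal hq0.le
  have hPpos : 0 < (ENNReal.ofReal q).toReal := by rw [hP]; exact hq0
  have hsum : ∀ i : Fin n, Summable fun k : ℕ => ‖v i k‖ ^ q := by
    intro i
    have := (lp.memℓp (v i)).summable hPpos
    rwa [hP] at this
  have hsumpair : ∀ p : Fin n × Fin n, Summable fun k : ℕ => ‖(v p.1 - v p.2) k‖ ^ q := by
    intro p
    have := (lp.memℓp (v p.1 - v p.2)).summable hPpos
    rwa [hP] at this
  have hnorm : ∀ i : Fin n, ‖v i‖ ^ q = ∑' k, ‖v i k‖ ^ q := by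
    intro i
    have := lp.norm_rpow_eq_tsum hPpos (v i)
    rwa [hP] at this
  have hnormpair : ∀ p : Fin n × Fin n,
      ‖v p.1 - v p.2‖ ^ q = ∑' k, ‖(v p.1 - v p.2) k‖ ^ q := by
    intro p
    have := lp.norm_rpow_eq_tsum hPpos (v p.1 - v p.2)
    rwa [hP] at this
  have habs2 : ∀ t : ℝ, (|t| ^ (q/2)) ^ 2 = |t| ^ q := by
    intro t
    calc (|t| ^ (q/2)) ^ 2 = (|t| ^ (q/2)) ^ (2:ℝ) := (Real.rpow_two _).symm
      _ = |t| ^ (q/2 * 2) := (Real.rpow_mul (abs_nonneg _) _ _).symm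
      _ = |t| ^ q := by norm_num
  have hpt : ∀ k : ℕ, ∑ p ∈ Finset.univ.filter (fun p : Fin n × Fin n => p.1 < p.2),
      ‖(v p.1 - v p.2) k‖ ^ q ≤ n * 2 ^ (q-2) * ∑ i, ‖v i k‖ ^ q := by
    intro k
    set b : Fin n → ℝ := fun i => sgnPow (q/2) (v i k) with hb
    have hb2 : ∀ i, (b i) ^ 2 = ‖v i k‖ ^ q := by
      intro i
      rw [hb]
      simp only []
      rw [sgnPow_sq, habs2, Real.norm_eq_abs]
    have hcoord : ∀ p : Fin n × Fin n, (v p.1 - v p.2) k = v p.1 k - v p.2 k := by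
      intro p
      rw [lp.coeFn_sub]
      rfl
    calc ∑ p ∈ Finset.univ.filter (fun p : Fin n × Fin n => p.1 < p.2),
          ‖(v p.1 - v p.2) k‖ ^ q
        = ∑ p ∈ Finset.univ.filter (fun p : Fin n × Fin n => p.1 < p.2),
          |v p.1 k - v p.2 k| ^ q := by
          refine Finset.sum_congr rfl fun p _ => ?_
          rw [hcoord, Real.norm_eq_abs]
      _ ≤ ∑ p ∈ Finset.univ.filter (fun p : Fin n × Fin n => p.1 < p.2),
          2 ^ (q-2) * (b p.1 - b p.2) ^ 2 :=
          Finset.sum_le_sum fun p _ => scalar_key' hq _ _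
      _ = 2 ^ (q-2) * ∑ p ∈ Finset.univ.filter (fun p : Fin n × Fin n => p.1 < p.2),
          (b p.1 - b p.2) ^ 2 := by rw [Finset.mul_sum]
      _ ≤ 2 ^ (q-2) * ((n : ℝ) * ∑ i, b i ^ 2) :=
          mul_le_mul_of_nonneg_left (hilbert_bound n b)
            (Real.rpow_nonneg (by norm_num) _)
      _ = n * 2 ^ (q-2) * ∑ i, ‖v i k‖ ^ q := by
          simp only [hb2]
          ring
  calc ∑ p ∈ Finset.univ.filter (fun p : Fin n × Fin n => p.1 < p.2), ‖v p.1 - v p.2‖ ^ q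
      = ∑ p ∈ Finset.univ.filter (fun p : Fin n × Fin n => p.1 < p.2),
        ∑' k, ‖(v p.1 - v p.2) k‖ ^ q :=
        Finset.sum_congr rfl fun p _ => hnormpair p
    _ = ∑' k, ∑ p ∈ Finset.univ.filter (fun p : Fin n × Fin n => p.1 < p.2),
        ‖(v p.1 - v p.2) k‖ ^ q :=
        (Summable.tsum_finsetSum fun p _ => hsumpair p).symm
    _ ≤ ∑' k, (n * 2 ^ (q-2) * ∑ i, ‖v i k‖ ^ q) := by
        refine Summable.tsum_le_tsum hpt (summable_sum fun p _ => hsumpair p) ?_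
        exact (summable_sum fun i _ => hsum i).mul_left _
    _ = n * 2 ^ (q-2) * ∑' k, ∑ i, ‖v i k‖ ^ q := tsum_mul_left
    _ = n * 2 ^ (q-2) * ∑ i, ∑' k, ‖v i k‖ ^ q := by
        rw [Summable.tsum_finsetSum fun i _ => hsum i]
    _ = n * 2 ^ (q - 2) * ∑ i, ‖v i‖ ^ q := by
        simp only [hnorm]
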